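/- arXiv:2109.04585 — 2 statements merged into one kernel-verified Lean document; each statement's English description precedes it below -/
import Mathlib

section
/- Let g ∈ C²(Γ) with g_z < 0 and define Q(x,y,z) = −g_y(x,y,z)/g_z(x,y,z). Then the Jacobian matrix of the map x ↦ Q(x,y,z) (for fixed y,z) equals −Eᵗ/g_z, where E = g_{xy} − (g_z)^{-1} g_{xz} ⊗ g_y; in particular, if det E ≠ 0 (condition A2) then this Jacobian is invertible, i.e., condition A2 is self-dual. -/
namespace Stmt7Aux

variable {n : ℕ}

noncomputable def L1 (n : ℕ) : (Fin n → ℝ) →L[ℝ] ((Fin n → ℝ) × (Fin n → ℝ) × ℝ) :=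
  (ContinuousLinearMap.id ℝ _).prod 0

noncomputable def L2 (n : ℕ) : (Fin n → ℝ) →L[ℝ] ((Fin n → ℝ) × (Fin n → ℝ) × ℝ) :=
  (0 : _ →L[ℝ] _).prod ((ContinuousLinearMap.id ℝ _).prod 0)

noncomputable def L3 (n : ℕ) : ℝ →L[ℝ] ((Fin n → ℝ) × (Fin n → ℝ) × ℝ) :=
  (0 : _ →L[ℝ] _).prod ((0 : _ →L[ℝ] _).prod (ContinuousLinearMap.id ℝ ℝ))

@[simp] lemma L1_apply (v : Fin n → ℝ) : L1 n v = (v, 0, 0) := rfl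
@[simp] lemma L2_apply (v : Fin n → ℝ) : L2 n v = (0, v, 0) := rfl
@[simp] lemma L3_apply (t : ℝ) : L3 n t = (0, 0, t) := rfl

lemma hasFDerivAt_slice1 (b : Fin n → ℝ) (c : ℝ) (a : Fin n → ℝ) :
    HasFDerivAt (fun x' => ((x', b, c) : (Fin n → ℝ) × (Fin n → ℝ) × ℝ)) (L1 n) a :=
  HasFDerivAt.prodMk (hasFDerivAt_id a) (hasFDerivAt_const (b, c) a)

lemma hasFDerivAt_slice2 (a : Fin n → ℝ) (c : ℝ) (b : Fin n → ℝ) :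
    HasFDerivAt (fun y' => ((a, y', c) : (Fin n → ℝ) × (Fin n → ℝ) × ℝ)) (L2 n) b :=
  HasFDerivAt.prodMk (hasFDerivAt_const a b) (HasFDerivAt.prodMk (hasFDerivAt_id b) (hasFDerivAt_const c b))

lemma hasFDerivAt_slice3 (a b : Fin n → ℝ) (c : ℝ) :
    HasFDerivAt (fun z' => ((a, b, z') : (Fin n → ℝ) × (Fin n → ℝ) × ℝ)) (L3 n) c :=
  HasFDerivAt.prodMk (hasFDerivAt_const a c) (HasFDerivAt.prodMk (hasFDerivAt_const b c) (hasFDerivAt_id c))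

variable {G : ((Fin n → ℝ) × (Fin n → ℝ) × ℝ) → ℝ}

lemma fderiv_slice1 {a b : Fin n → ℝ} {c : ℝ} (h : DifferentiableAt ℝ G (a, b, c)) :
    fderiv ℝ (fun x' => G (x', b, c)) a = (fderiv ℝ G (a, b, c)).comp (L1 n) :=
  (h.hasFDerivAt.comp a (hasFDerivAt_slice1 b c a)).fderiv

lemma fderiv_slice2 {a b : Fin n → ℝ} {c : ℝ} (h : DifferentiableAt ℝ G (a, b, c)) :
    fderiv ℝ (fun y' => G (a, y', c)) b = (fderiv ℝ G (a, b, c)).comp (L2 n) :=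
  (h.hasFDerivAt.comp b (hasFDerivAt_slice2 a c b)).fderiv

lemma deriv_slice3 {a b : Fin n → ℝ} {c : ℝ} (h : DifferentiableAt ℝ G (a, b, c)) :
    deriv (fun z' => G (a, b, z')) c = fderiv ℝ G (a, b, c) (0, 0, 1) := by
  have H : HasFDerivAt (fun z' => G (a, b, z'))
      ((fderiv ℝ G (a, b, c)).comp (L3 n)) c :=
    h.hasFDerivAt.comp c (hasFDerivAt_slice3 a b c)
  rw [← fderiv_apply_one_eq_deriv, H.fderiv]
  simp

end Stmt7Aux
open Topology Filter in
open Stmt7Aux in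
/-- For `g ∈ C²` with `g_z < 0` and `Q = -g_y/g_z`, the Jacobian matrix of
`x ↦ Q(x,y,z)` equals `-Eᵗ/g_z`; in particular when `det E ≠ 0` (condition A2)
this Jacobian matrix is invertible, i.e. condition A2 is self-dual. -/
theorem stmt7 {n : ℕ} (Γ : Set ((Fin n → ℝ) × (Fin n → ℝ) × ℝ)) (hΓ : IsOpen Γ)
    (g : (Fin n → ℝ) → (Fin n → ℝ) → ℝ → ℝ)
    (hg : ContDiffOn ℝ 2 (fun q : (Fin n → ℝ) × (Fin n → ℝ) × ℝ => g q.1 q.2.1 q.2.2) Γ)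
    (hgzneg : ∀ x y z, (x, y, z) ∈ Γ → deriv (fun z' => g x y z') z < 0)
    (Q : (Fin n → ℝ) → (Fin n → ℝ) → ℝ → (Fin n → ℝ))
    (hQ : ∀ x y z i, Q x y z i =
      -(fderiv ℝ (fun y' => g x y' z) y (Pi.single i 1)) / deriv (fun z' => g x y z') z)
    (E : (Fin n → ℝ) → (Fin n → ℝ) → ℝ → Matrix (Fin n) (Fin n) ℝ)
    (hE : ∀ x y z, E x y z = Matrix.of fun i j =>
      fderiv ℝ (fun y' => fderiv ℝ (fun x' => g x' y' z) x (Pi.single i 1)) y (Pi.single j 1)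
        - (deriv (fun z' => g x y z') z)⁻¹
            * deriv (fun z' => fderiv ℝ (fun x' => g x' y z') x (Pi.single i 1)) z
            * fderiv ℝ (fun y' => g x y' z) y (Pi.single j 1))
    (x y : Fin n → ℝ) (z : ℝ) (hxyz : (x, y, z) ∈ Γ) :
    (∀ i j, fderiv ℝ (fun x' => Q x' y z i) x (Pi.single j 1)
        = -(E x y z j i) / deriv (fun z' => g x y z') z) ∧
      ((E x y z).det ≠ 0 →
        IsUnit (Matrix.of fun i j =>
          fderiv ℝ (fun x' => Q x' y z i) x (Pi.single j 1)).det) := by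
  set G : ((Fin n → ℝ) × (Fin n → ℝ) × ℝ) → ℝ :=
    fun q => g q.1 q.2.1 q.2.2 with hGdef
  have hG2 : ContDiffAt ℝ 2 G (x, y, z) := hg.contDiffAt (hΓ.mem_nhds hxyz)
  have hev : ∀ᶠ q in 𝓝 ((x, y, z) : (Fin n → ℝ) × (Fin n → ℝ) × ℝ),
      DifferentiableAt ℝ G q := by
    filter_upwards [hG2.eventually (by norm_num)] with q hq
    exact hq.differentiableAt two_ne_zero
  have hdiff : DifferentiableAt ℝ G (x, y, z) := hG2.differentiableAt two_ne_zero
  set f'' := fderiv ℝ (fderiv ℝ G) (x, y, z) with hf''def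
  have hfd : ContDiffAt ℝ 1 (fderiv ℝ G) (x, y, z) := hG2.fderiv_right le_rfl
  have hf''d : HasFDerivAt (fderiv ℝ G) f'' (x, y, z) :=
    (hfd.differentiableAt one_ne_zero).hasFDerivAt
  have hsymm : ∀ v w, f'' v w = f'' w v := hG2.isSymmSndFDerivAt (by simp [minSmoothness_of_isRCLikeNormedField])
  have hB : ∀ v w : Fin n → ℝ,
      fderiv ℝ (fun y' => fderiv ℝ (fun x' => g x' y' z) x v) y w
        = f'' (0, w, 0) (v, 0, 0) := by
    intro v w
    have ht : Filter.Tendsto (fun y' => ((x, y', z) : (Fin n → ℝ) × (Fin n → ℝ) × ℝ))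
        (𝓝 y) (𝓝 (x, y, z)) := Continuous.tendsto (by fun_prop) y
    have hev2 : (fun y' => fderiv ℝ (fun x' => g x' y' z) x v) =ᶠ[𝓝 y]
        fun y' => fderiv ℝ G (x, y', z) (v, 0, 0) := by
      filter_upwards [ht.eventually hev] with y' hy'
      rw [show (fun x' => g x' y' z) = (fun x' => G (x', y', z)) from rfl,
        fderiv_slice1 hy']
      simp
    have key : HasFDerivAt (fun y' => fderiv ℝ G (x, y', z) (v, 0, 0))
        ((ContinuousLinearMap.apply ℝ ℝ ((v, 0, 0) : (Fin n → ℝ) × (Fin n → ℝ) × ℝ)).comp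
          (f''.comp (L2 n))) y := by
      have h1 := hf''d.comp y (hasFDerivAt_slice2 x z y)
      exact (ContinuousLinearMap.apply ℝ ℝ
        ((v, 0, 0) : (Fin n → ℝ) × (Fin n → ℝ) × ℝ)).hasFDerivAt.comp y h1
    rw [hev2.fderiv_eq, key.fderiv]
    simp
  have hC : ∀ v : Fin n → ℝ,
      deriv (fun z' => fderiv ℝ (fun x' => g x' y z') x v) z
        = f'' (0, 0, 1) (v, 0, 0) := by
    intro v
    have ht : Filter.Tendsto (fun z' => ((x, y, z') : (Fin n → ℝ) × (Fin n → ℝ) × ℝ))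
        (𝓝 z) (𝓝 (x, y, z)) := Continuous.tendsto (by fun_prop) z
    have hev3 : (fun z' => fderiv ℝ (fun x' => g x' y z') x v) =ᶠ[𝓝 z]
        fun z' => fderiv ℝ G (x, y, z') (v, 0, 0) := by
      filter_upwards [ht.eventually hev] with z' hz'
      rw [show (fun x' => g x' y z') = (fun x' => G (x', y, z')) from rfl,
        fderiv_slice1 hz']
      simp
    have key : HasFDerivAt (fun z' => fderiv ℝ G (x, y, z') (v, 0, 0))
        ((ContinuousLinearMap.apply ℝ ℝ ((v, 0, 0) : (Fin n → ℝ) × (Fin n → ℝ) × ℝ)).comp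
          (f''.comp (L3 n))) z := by
      have h1 := hf''d.comp z (hasFDerivAt_slice3 x y z)
      exact (ContinuousLinearMap.apply ℝ ℝ
        ((v, 0, 0) : (Fin n → ℝ) × (Fin n → ℝ) × ℝ)).hasFDerivAt.comp z h1
    rw [hev3.deriv_eq, ← fderiv_apply_one_eq_deriv, key.fderiv]
    simp
  have hgz : deriv (fun z' => g x y z') z = fderiv ℝ G (x, y, z) (0, 0, 1) :=
    deriv_slice3 hdiff
  have hD0 : fderiv ℝ G (x, y, z) (0, 0, 1) ≠ 0 := by
    have := hgzneg x y z hxyz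
    rw [hgz] at this
    exact ne_of_lt this
  have hmain : ∀ i j, fderiv ℝ (fun x' => Q x' y z i) x (Pi.single j 1)
      = -(E x y z j i) / deriv (fun z' => g x y z') z := by
    intro i j
    have ht : Filter.Tendsto (fun x' => ((x', y, z) : (Fin n → ℝ) × (Fin n → ℝ) × ℝ))
        (𝓝 x) (𝓝 (x, y, z)) := Continuous.tendsto (by fun_prop) x
    have heq : (fun x' => Q x' y z i) =ᶠ[𝓝 x]
        fun x' => (-(fderiv ℝ G (x', y, z) (0, Pi.single i 1, 0)))
          * (fderiv ℝ G (x', y, z) (0, 0, 1))⁻¹ := by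
      filter_upwards [ht.eventually hev] with x' hx'
      rw [hQ x' y z i,
        show (fun y' => g x' y' z) = (fun y' => G (x', y', z)) from rfl,
        show (fun z' => g x' y z') = (fun z' => G (x', y, z')) from rfl,
        fderiv_slice2 hx', deriv_slice3 hx', div_eq_mul_inv]
      simp
    have hN : HasFDerivAt (fun x' => fderiv ℝ G (x', y, z) (0, Pi.single i 1, 0))
        ((ContinuousLinearMap.apply ℝ ℝ
            ((0, Pi.single i 1, 0) : (Fin n → ℝ) × (Fin n → ℝ) × ℝ)).comp
          (f''.comp (L1 n))) x := by
      have h1 := hf''d.comp x (hasFDerivAt_slice1 y z x)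
      exact (ContinuousLinearMap.apply ℝ ℝ
        ((0, Pi.single i 1, 0) : (Fin n → ℝ) × (Fin n → ℝ) × ℝ)).hasFDerivAt.comp x h1
    have hD : HasFDerivAt (fun x' => fderiv ℝ G (x', y, z) (0, 0, 1))
        ((ContinuousLinearMap.apply ℝ ℝ ((0, 0, 1) : (Fin n → ℝ) × (Fin n → ℝ) × ℝ)).comp
          (f''.comp (L1 n))) x := by
      have h1 := hf''d.comp x (hasFDerivAt_slice1 y z x)
      exact (ContinuousLinearMap.apply ℝ ℝ
        ((0, 0, 1) : (Fin n → ℝ) × (Fin n → ℝ) × ℝ)).hasFDerivAt.comp x h1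
    have hinv : HasFDerivAt (fun x' => (fderiv ℝ G (x', y, z) (0, 0, 1))⁻¹)
        ((ContinuousLinearMap.smulRight (1 : ℝ →L[ℝ] ℝ)
            (-((fderiv ℝ G (x, y, z) (0, 0, 1)) ^ 2)⁻¹)).comp
          (((ContinuousLinearMap.apply ℝ ℝ
              ((0, 0, 1) : (Fin n → ℝ) × (Fin n → ℝ) × ℝ)).comp
            (f''.comp (L1 n))))) x := by
      exact (hasFDerivAt_inv hD0).comp x hD
    have hprod := (hN.fun_neg).fun_mul hinv
    rw [heq.fderiv_eq, hprod.fderiv]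
    rw [hE, hgz,
      show (fun y' => g x y' z) = (fun y' => G (x, y', z)) from rfl]
    rw [Matrix.of_apply, hB (Pi.single j 1) (Pi.single i 1), hC (Pi.single j 1),
      fderiv_slice2 hdiff]
    simp only [ContinuousLinearMap.add_apply, ContinuousLinearMap.smul_apply,
      ContinuousLinearMap.comp_apply, ContinuousLinearMap.neg_apply,
      ContinuousLinearMap.apply_apply, ContinuousLinearMap.smulRight_apply,
      ContinuousLinearMap.one_apply, L1_apply, L2_apply, smul_eq_mul]
    rw [hsymm (0, Pi.single i 1, 0) (Pi.single j 1, 0, 0),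
      hsymm (0, 0, 1) (Pi.single j 1, 0, 0)]
    set A := f'' (Pi.single j 1, 0, 0) (0, Pi.single i 1, 0) with hA
    set B := f'' (Pi.single j 1, 0, 0) (0, 0, 1) with hBv
    set N₀ := fderiv ℝ G (x, y, z) (0, Pi.single i 1, 0) with hN0
    set D₀ := fderiv ℝ G (x, y, z) (0, 0, 1) with hD0'
    clear_value A B N₀ D₀
    field_simp
    ring
  refine ⟨hmain, fun hdet => ?_⟩
  have hgz0 : deriv (fun z' => g x y z') z ≠ 0 := by
    rw [hgz]; exact hD0
  have hJ : (Matrix.of fun i j =>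
      fderiv ℝ (fun x' => Q x' y z i) x (Pi.single j 1))
      = (-(deriv (fun z' => g x y z') z)⁻¹) • (E x y z).transpose := by
    ext i j
    rw [Matrix.of_apply, hmain i j]
    simp only [Matrix.smul_apply, Matrix.transpose_apply, smul_eq_mul,
      div_eq_inv_mul, neg_mul, mul_neg, neg_neg]
  rw [hJ, Matrix.det_smul, Matrix.det_transpose]
  exact isUnit_iff_ne_zero.mpr
    (mul_ne_zero (pow_ne_zero _ (neg_ne_zero.mpr (inv_ne_zero hgz0))) hdet)
end

section
/- Every g-convex function is locally semi-convex: if u is g-convex in Ω and g ∈ C²(Γ), then for every compact K ⊂ Ω there is a constant C such that x ↦ u(x) + C|x|²/2 is convex on every ball contained in K, provided the g-supports of u on K have parameters (y,z) ranging in a compact subset of Γ. -/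
set_option maxHeartbeats 1000000

lemma seg_bound {φ φ' : ℝ → ℝ} {I : Set ℝ} (hIo : IsOpen I) (hIc : Convex ℝ I)
    (h0 : (0:ℝ) ∈ I) (h1 : (1:ℝ) ∈ I) {c : ℝ}
    (hd1 : ∀ t ∈ I, HasDerivAt φ (φ' t) t)
    (hd2 : ∀ t ∈ I, ∃ φ'', HasDerivAt φ' φ'' t ∧ -(2*c) ≤ φ'')
    {a b : ℝ} (ha : 0 ≤ a) (hb : 0 ≤ b) (hab : a + b = 1) :
    φ b ≤ a * φ 0 + b * φ 1 + a * b * c := by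
  set ρ : ℝ → ℝ := fun t => φ t + c * t ^ 2 with hρ
  have hρd : ∀ t ∈ I, HasDerivAt ρ (φ' t + 2 * c * t) t := by
    intro t ht
    have h2 : HasDerivAt (fun t : ℝ => c * t ^ 2) (2 * c * t) t := by
      simpa [mul_comm, mul_assoc, mul_left_comm] using (hasDerivAt_pow 2 t).const_mul c
    exact (hd1 t ht).add h2
  have hderiv : ∀ t ∈ I, deriv ρ t = φ' t + 2 * c * t := fun t ht => (hρd t ht).deriv
  have hconv : ConvexOn ℝ I ρ := by
    refine convexOn_of_deriv2_nonneg hIc ?_ ?_ ?_ ?_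
    · exact fun t ht => ((hρd t ht).continuousAt).continuousWithinAt
    · intro t ht
      rw [hIo.interior_eq] at ht
      exact ((hρd t ht).differentiableAt).differentiableWithinAt
    · intro t ht
      rw [hIo.interior_eq] at ht
      obtain ⟨φ'', h2, _⟩ := hd2 t ht
      have : HasDerivAt (fun s => φ' s + 2 * c * s) (φ'' + 2 * c) t := by
        exact (h2.add ((hasDerivAt_id t).const_mul (2 * c))).congr_deriv (by simp)
      have heq : deriv ρ =ᶠ[nhds t] fun s => φ' s + 2 * c * s :=
        Filter.eventuallyEq_of_mem (hIo.mem_nhds ht) hderiv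
      exact (heq.differentiableAt_iff.mpr this.differentiableAt).differentiableWithinAt
    · intro t ht
      rw [hIo.interior_eq] at ht
      obtain ⟨φ'', h2, hge⟩ := hd2 t ht
      have hd : HasDerivAt (fun s => φ' s + 2 * c * s) (φ'' + 2 * c) t := by
        exact (h2.add ((hasDerivAt_id t).const_mul (2 * c))).congr_deriv (by simp)
      have heq : deriv ρ =ᶠ[nhds t] fun s => φ' s + 2 * c * s :=
        Filter.eventuallyEq_of_mem (hIo.mem_nhds ht) hderiv
      have : deriv (deriv ρ) t = φ'' + 2 * c := by
        rw [heq.deriv_eq, hd.deriv]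
      simp only [Function.iterate_succ, Function.iterate_zero, Function.comp_apply, id_eq]
      rw [this]; linarith
  have key := hconv.2 h0 h1 ha hb hab
  simp only [smul_eq_mul, mul_zero, mul_one, zero_add, hρ] at key
  -- key : φ b + c * b ^ 2 ≤ a * (φ 0 + c * 0 ^ 2) + b * (φ 1 + c * 1 ^ 2)
  have h2 : a * b * c = b * c - c * b ^ 2 := by rw [show a = 1 - b by linarith]; ring
  linarith

lemma sq_sum_identity {n : ℕ} (x y : Fin n → ℝ) {a b : ℝ} (hab : a + b = 1) :
    a * (∑ i, x i ^ 2) + b * (∑ i, y i ^ 2) - (∑ i, (a • x + b • y) i ^ 2)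
      = a * b * ∑ i, (y i - x i) ^ 2 := by
  rw [Finset.mul_sum, Finset.mul_sum, Finset.mul_sum, ← Finset.sum_add_distrib,
    ← Finset.sum_sub_distrib]
  refine Finset.sum_congr rfl fun i _ => ?_
  simp only [Pi.add_apply, Pi.smul_apply, smul_eq_mul]
  rw [show a = 1 - b by linarith]; ring

lemma norm_sq_le_sum {n : ℕ} (d : Fin n → ℝ) : ‖d‖ ^ 2 ≤ ∑ i, (d i) ^ 2 := by
  have h : ‖d‖ ≤ Real.sqrt (∑ i, (d i) ^ 2) := by
    rw [pi_norm_le_iff_of_nonneg (Real.sqrt_nonneg _)]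
    intro i
    have h1 : (d i) ^ 2 ≤ ∑ j, (d j) ^ 2 :=
      Finset.single_le_sum (fun j _ => sq_nonneg (d j)) (Finset.mem_univ i)
    calc ‖d i‖ = Real.sqrt ((d i) ^ 2) := by
          rw [Real.sqrt_sq_eq_abs]; rfl
      _ ≤ _ := Real.sqrt_le_sqrt h1
    
  calc ‖d‖ ^ 2 ≤ Real.sqrt (∑ i, (d i) ^ 2) ^ 2 := by
        exact pow_le_pow_left₀ (norm_nonneg _) h 2
    _ = _ := Real.sq_sqrt (Finset.sum_nonneg fun i _ => sq_nonneg _)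

/-- Every g-convex function is locally semi-convex: if `g ∈ C²(Γ)` and the
g-supports of `u` on the compact set `K ⊆ Ω` have parameters `(y,z)` ranging in a
compact set `S` with `K × S ⊆ Γ`, then there is `C` such that
`x ↦ u(x) + C|x|²/2` is convex on every ball contained in `K`. -/
theorem stmt15 {n : ℕ} (Γ : Set ((Fin n → ℝ) × (Fin n → ℝ) × ℝ)) (hΓ : IsOpen Γ)
    (g : (Fin n → ℝ) → (Fin n → ℝ) → ℝ → ℝ)
    (hg : ContDiffOn ℝ 2 (fun q : (Fin n → ℝ) × (Fin n → ℝ) × ℝ => g q.1 q.2.1 q.2.2) Γ)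
    (Ω K : Set (Fin n → ℝ)) (hK : IsCompact K) (hKΩ : K ⊆ Ω)
    (u : (Fin n → ℝ) → ℝ)
    (S : Set ((Fin n → ℝ) × ℝ)) (hS : IsCompact S)
    (hSΓ : ∀ x ∈ K, ∀ yz ∈ S, (x, yz.1, yz.2) ∈ Γ)
    (hsupp : ∀ x₀ ∈ K, ∃ yz ∈ S, g x₀ yz.1 yz.2 = u x₀ ∧ ∀ x ∈ Ω, g x yz.1 yz.2 ≤ u x) :
    ∃ C : ℝ, ∀ (x₀ : Fin n → ℝ) (r : ℝ), Metric.ball x₀ r ⊆ K →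
      ConvexOn ℝ (Metric.ball x₀ r) (fun x => u x + C * (∑ i, x i ^ 2) / 2) := by
  set F : (Fin n → ℝ) × (Fin n → ℝ) × ℝ → ℝ :=
    fun q => g q.1 q.2.1 q.2.2 with hF
  have hF2 : ∀ q ∈ Γ, ContDiffAt ℝ 2 F q := fun q hq => hg.contDiffAt (hΓ.mem_nhds hq)
  have hFd : ∀ q ∈ Γ, DifferentiableAt ℝ F q := fun q hq =>
    (hF2 q hq).differentiableAt two_ne_zero
  have hF1 : ∀ q ∈ Γ, ContDiffAt ℝ 1 (fderiv ℝ F) q := fun q hq =>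
    (hF2 q hq).fderiv_right (by norm_num)
  have hGd : ∀ q ∈ Γ, DifferentiableAt ℝ (fderiv ℝ F) q := fun q hq =>
    (hF1 q hq).differentiableAt one_ne_zero
  have hGc : ∀ q ∈ Γ, ContinuousAt (fderiv ℝ (fderiv ℝ F)) q := fun q hq =>
    ((hF1 q hq).fderiv_right (m := 0) (by norm_num)).continuousAt
  have hTΓ : K ×ˢ S ⊆ Γ := by
    rintro ⟨x, y, z⟩ ⟨hx, hyz⟩
    exact hSΓ x hx (y, z) hyz
  obtain ⟨M₀, hM₀⟩ := (hK.prod hS).exists_bound_of_continuousOn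
    (f := fderiv ℝ (fderiv ℝ F)) (fun q hq => (hGc q (hTΓ hq)).continuousWithinAt)
  set M : ℝ := max M₀ 0 with hM
  have hMnn : (0:ℝ) ≤ M := le_max_right _ _
  refine ⟨M, ?_⟩
  intro x₀ r hball
  refine ⟨convex_ball x₀ r, ?_⟩
  intro x1 hx1 x2 hx2 a b ha hb hab
  have hz₀ : a • x1 + b • x2 ∈ Metric.ball x₀ r := (convex_ball x₀ r) hx1 hx2 ha hb hab
  obtain ⟨yz, hyzS, heq, hle⟩ := hsupp _ (hball hz₀)
  set d : Fin n → ℝ := x2 - x1 with hd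
  set L : ℝ → (Fin n → ℝ) × (Fin n → ℝ) × ℝ := fun t => (x1 + t • d, yz.1, yz.2) with hL
  set I : Set ℝ := (fun t : ℝ => x1 + t • d) ⁻¹' Metric.ball x₀ r with hI
  have hIo : IsOpen I :=
    (Metric.isOpen_ball).preimage (continuous_const.add (continuous_id.smul continuous_const))
  have hIc : Convex ℝ I := by
    intro t1 ht1 t2 ht2 p q hp hq hpq
    have key : x1 + (p * t1 + q * t2) • d = p • (x1 + t1 • d) + q • (x1 + t2 • d) := by
      funext i
      simp only [Pi.add_apply, Pi.smul_apply, smul_eq_mul]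
      rw [show q = 1 - p by linarith]; ring
    have : x1 + (p • t1 + q • t2) • d ∈ Metric.ball x₀ r := by
      rw [smul_eq_mul, smul_eq_mul, key]
      exact (convex_ball x₀ r) ht1 ht2 hp hq hpq
    exact this
  have h0I : (0:ℝ) ∈ I := by
    simp only [hI, Set.mem_preimage, zero_smul, add_zero]
    exact hx1
  have h1I : (1:ℝ) ∈ I := by
    simp only [hI, Set.mem_preimage, one_smul, hd]
    simpa using hx2
  have hLK : ∀ t ∈ I, x1 + t • d ∈ K := fun t ht => hball ht
  have hLΓ : ∀ t ∈ I, L t ∈ Γ := fun t ht => hSΓ _ (hLK t ht) yz hyzS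
  have hLT : ∀ t ∈ I, L t ∈ K ×ˢ S := fun t ht => ⟨hLK t ht, hyzS⟩
  have hLd : ∀ t : ℝ, HasDerivAt L ((d, 0, 0) : (Fin n → ℝ) × (Fin n → ℝ) × ℝ) t := by
    intro t
    have h1 : HasDerivAt (fun t : ℝ => x1 + t • d) d t := by
      simpa using (((hasDerivAt_id t).smul_const d).const_add x1)
    exact h1.prodMk (hasDerivAt_const t (yz.1, yz.2))
  set v : (Fin n → ℝ) × (Fin n → ℝ) × ℝ := (d, 0, 0) with hv
  have hvnorm : ‖v‖ = ‖d‖ := by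
    simp only [hv, Prod.norm_def, norm_zero]
    simp [max_eq_left (norm_nonneg d)]
  set φ : ℝ → ℝ := fun t => F (L t) with hφ
  set φ' : ℝ → ℝ := fun t => fderiv ℝ F (L t) v with hφ'
  set c : ℝ := M * ‖d‖ ^ 2 / 2 with hc
  have hd1 : ∀ t ∈ I, HasDerivAt φ (φ' t) t := fun t ht =>
    ((hFd _ (hLΓ t ht)).hasFDerivAt).comp_hasDerivAt t (hLd t)
  have hd2 : ∀ t ∈ I, ∃ φ'', HasDerivAt φ' φ'' t ∧ -(2 * c) ≤ φ'' := by
    intro t ht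
    have hqΓ := hLΓ t ht
    have hB : HasDerivAt (fun s => fderiv ℝ F (L s)) (fderiv ℝ (fderiv ℝ F) (L t) v) t :=
      ((hGd _ hqΓ).hasFDerivAt).comp_hasDerivAt t (hLd t)
    refine ⟨fderiv ℝ (fderiv ℝ F) (L t) v v, ?_, ?_⟩
    · simpa using hB.clm_apply (hasDerivAt_const t v)
    · have h1 : ‖fderiv ℝ (fderiv ℝ F) (L t) v v‖ ≤ ‖fderiv ℝ (fderiv ℝ F) (L t) v‖ * ‖v‖ :=
        ContinuousLinearMap.le_opNorm _ _
      have h2 : ‖fderiv ℝ (fderiv ℝ F) (L t) v‖ ≤ ‖fderiv ℝ (fderiv ℝ F) (L t)‖ * ‖v‖ :=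
        ContinuousLinearMap.le_opNorm _ _
      have h3 : ‖fderiv ℝ (fderiv ℝ F) (L t)‖ ≤ M₀ := hM₀ _ (hLT t ht)
      have h4 : ‖fderiv ℝ (fderiv ℝ F) (L t) v v‖ ≤ M * ‖d‖ ^ 2 := by
        have hM₀M : M₀ ≤ M := le_max_left _ _
        have hvn : (0:ℝ) ≤ ‖v‖ := norm_nonneg _
        calc ‖fderiv ℝ (fderiv ℝ F) (L t) v v‖ ≤ ‖fderiv ℝ (fderiv ℝ F) (L t)‖ * ‖v‖ * ‖v‖ := by
              nlinarith [norm_nonneg (fderiv ℝ (fderiv ℝ F) (L t) v)]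
          _ ≤ M * ‖v‖ * ‖v‖ :=
              mul_le_mul_of_nonneg_right (mul_le_mul_of_nonneg_right (h3.trans hM₀M) hvn) hvn
          _ = M * ‖d‖ ^ 2 := by rw [hvnorm]; ring
      have h5 := neg_abs_le (fderiv ℝ (fderiv ℝ F) (L t) v v)
      have h6 : |fderiv ℝ (fderiv ℝ F) (L t) v v| = ‖fderiv ℝ (fderiv ℝ F) (L t) v v‖ := rfl
      rw [hc]
      rw [h6] at h5
      linarith
  have hseg := seg_bound hIo hIc h0I h1I hd1 hd2 ha hb hab
  -- identify φ 0, φ 1, φ b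
  have hφ0 : φ 0 = g x1 yz.1 yz.2 := by simp [hφ, hL, hF]
  have hφ1 : φ 1 = g x2 yz.1 yz.2 := by
    simp only [hφ, hL, hF, one_smul, hd]
    congr 1 <;> simp
  have hpt : x1 + b • d = a • x1 + b • x2 := by
    funext i
    simp only [Pi.add_apply, Pi.smul_apply, Pi.sub_apply, smul_eq_mul, hd]
    rw [show a = 1 - b by linarith]; ring
  have hφb : φ b = u (a • x1 + b • x2) := by
    simp only [hφ, hL, hF]
    rw [hpt]
    exact heq
  have hx1Ω : x1 ∈ Ω := hKΩ (hball hx1)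
  have hx2Ω : x2 ∈ Ω := hKΩ (hball hx2)
  have hg1 : g x1 yz.1 yz.2 ≤ u x1 := hle x1 hx1Ω
  have hg2 : g x2 yz.1 yz.2 ≤ u x2 := hle x2 hx2Ω
  -- sum identity
  have hid := sq_sum_identity x1 x2 hab
  have hnle : ‖d‖ ^ 2 ≤ ∑ i, (x2 i - x1 i) ^ 2 := by
    have := norm_sq_le_sum d
    simpa [hd] using this
  have habnn : (0:ℝ) ≤ a * b := mul_nonneg ha hb
  have hkey : a * b * c ≤ M / 2 * (a * b * ∑ i, (x2 i - x1 i) ^ 2) := by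
    rw [hc]
    nlinarith [mul_nonneg (mul_nonneg habnn (by positivity : (0:ℝ) ≤ M / 2))
      (sub_nonneg.mpr hnle)]
  simp only [smul_eq_mul]
  have hu : u (a • x1 + b • x2) ≤ a * u x1 + b * u x2 + a * b * c := by
    rw [← hφb]
    calc φ b ≤ a * φ 0 + b * φ 1 + a * b * c := hseg
      _ ≤ a * u x1 + b * u x2 + a * b * c := by
          rw [hφ0, hφ1]
          nlinarith
  nlinarith [hu, hkey, hid]
end
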